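/- arXiv:1405.5579 — 2 statements merged into one kernel-verified Lean document; each statement's English description precedes it below -/
import Mathlib

section
/- Let W and Q be real polynomials and let I ⊆ ℝ be an open interval on which Q'(z) > 0. Let T : I → ℝ be an antiderivative of W·Q' on I and set σ(z) = √(Q'(z))·exp(T(z)). Then for every differentiable function φ : I → ℂ and every z ∈ I one has (1/Q'(z))·(σφ)'(z) − (Q''(z)/(2·Q'(z)²))·(σφ)(z) − W(z)·(σφ)(z) = σ(z)·(1/Q'(z))·φ'(z). In other words, conjugation by σ transforms the dual Kac–Schwarz operator Â^{W,Q} into the trivial connection (1/Q'(z))·d/dz. -/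
/-- Conjugation by `σ(z) = √(Q'(z)) · exp(T(z))` (where `T` is an
antiderivative of `W·Q'`) transforms the dual Kac–Schwarz operator
`Â^{W,Q} = (1/Q')·d/dz − Q''/(2·Q'²) − W` into the trivial connection `(1/Q')·d/dz`,
on an open interval `I` where `Q' > 0`. -/
theorem dual_kac_schwarz_conjugation
    (W Q : Polynomial ℝ) (I : Set ℝ) (hIopen : IsOpen I) (hIconn : IsPreconnected I)
    (hQ' : ∀ z ∈ I, 0 < (Polynomial.derivative Q).eval z)
    (T : ℝ → ℝ)
    (hT : ∀ z ∈ I, HasDerivAt T (W.eval z * (Polynomial.derivative Q).eval z) z)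
    (σ : ℝ → ℝ)
    (hσ : ∀ z ∈ I, σ z = Real.sqrt ((Polynomial.derivative Q).eval z) * Real.exp (T z))
    (φ : ℝ → ℂ) (hφ : ∀ z ∈ I, DifferentiableAt ℝ φ z) :
    ∀ z ∈ I,
      (1 / (((Polynomial.derivative Q).eval z : ℝ) : ℂ))
          * deriv (fun t => ((σ t : ℝ) : ℂ) * φ t) z
        - ((((Polynomial.derivative (Polynomial.derivative Q)).eval z : ℝ) : ℂ)
            / (2 * (((Polynomial.derivative Q).eval z : ℝ) : ℂ) ^ 2))
            * (((σ z : ℝ) : ℂ) * φ z)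
        - ((W.eval z : ℝ) : ℂ) * (((σ z : ℝ) : ℂ) * φ z)
      = ((σ z : ℝ) : ℂ) * ((1 / (((Polynomial.derivative Q).eval z : ℝ) : ℂ)) * deriv φ z) := by
  intro z hz
  set q : ℝ := (Polynomial.derivative Q).eval z with hq
  set q2 : ℝ := (Polynomial.derivative (Polynomial.derivative Q)).eval z with hq2
  have hqpos : 0 < q := hQ' z hz
  have hs : Real.sqrt q ≠ 0 := by positivity
  -- derivative of σ
  have hsqrt : HasDerivAt (fun t => Real.sqrt ((Polynomial.derivative Q).eval t))
      (q2 / (2 * Real.sqrt q)) z := by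
    have h1 : HasDerivAt (fun t => (Polynomial.derivative Q).eval t) q2 z := by
      simpa using (Polynomial.derivative Q).hasDerivAt z
    have h2 := (Real.hasDerivAt_sqrt (ne_of_gt hqpos)).comp z h1
    simpa [div_eq_mul_inv, mul_comm, mul_left_comm, mul_assoc, Function.comp_def] using h2
  have hexp : HasDerivAt (fun t => Real.exp (T t))
      (Real.exp (T z) * (W.eval z * q)) z := (hT z hz).exp
  have hg : HasDerivAt (fun t => Real.sqrt ((Polynomial.derivative Q).eval t) * Real.exp (T t))
      (q2 / (2 * Real.sqrt q) * Real.exp (T z)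
        + Real.sqrt q * (Real.exp (T z) * (W.eval z * q))) z := hsqrt.mul hexp
  have hσd : HasDerivAt σ
      (q2 / (2 * Real.sqrt q) * Real.exp (T z)
        + Real.sqrt q * (Real.exp (T z) * (W.eval z * q))) z := by
    apply hg.congr_of_eventuallyEq
    filter_upwards [hIopen.mem_nhds hz] with t ht
    exact hσ t ht
  set s' : ℝ := q2 / (2 * Real.sqrt q) * Real.exp (T z)
        + Real.sqrt q * (Real.exp (T z) * (W.eval z * q)) with hs'
  have hσC : HasDerivAt (fun t => ((σ t : ℝ) : ℂ)) (s' : ℂ) z := hσd.ofReal_comp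
  have hφd : HasDerivAt φ (deriv φ z) z := (hφ z hz).hasDerivAt
  have hprod : HasDerivAt (fun t => ((σ t : ℝ) : ℂ) * φ t)
      ((s' : ℂ) * φ z + ((σ z : ℝ) : ℂ) * deriv φ z) z := hσC.mul hφd
  rw [hprod.deriv]
  rw [hσ z hz]
  rw [← hq]
  have hsq : ((Real.sqrt q : ℝ) : ℂ) * ((Real.sqrt q : ℝ) : ℂ) = (q : ℂ) := by
    rw [← Complex.ofReal_mul, Real.mul_self_sqrt hqpos.le]
  have hqC : (q : ℂ) ≠ 0 := by exact_mod_cast ne_of_gt hqpos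
  have hsC : ((Real.sqrt q : ℝ) : ℂ) ≠ 0 := by exact_mod_cast hs
  rw [hs']
  push_cast
  field_simp
  ring_nf
  rw [show ((Real.sqrt q : ℝ) : ℂ) ^ 2 = (q : ℂ) from by rw [sq]; exact hsq]
  ring
end

section
/- Let ψ : ℝ → ℂ be twice differentiable with ψ''(x) = x·ψ(x) for all x ∈ ℝ (an Airy-type function). Define φ(z) = z^{1/2}·exp(−2z³/3)·ψ(z²) for z > 0, and define the operator A by (A f)(z) = (1/(2z))·f'(z) − (1/(4z²))·f(z) + z·f(z). Then (A(Aφ))(z) = z²·φ(z) for all z > 0. -/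
lemma kac_schwarz_step (ψ0 : ℝ → ℂ) (hψ0 : Differentiable ℝ ψ0) (h : ℝ → ℂ)
    (hh : ∀ z : ℝ, 0 < z →
      h z = (Real.sqrt z : ℂ) * Complex.exp (-(2 * (z : ℂ) ^ 3 / 3)) * ψ0 (z ^ 2))
    (z : ℝ) (hz : 0 < z) :
    (1 / (2 * (z : ℂ))) * deriv h z - (1 / (4 * (z : ℂ) ^ 2)) * h z + (z : ℂ) * h z
      = (Real.sqrt z : ℂ) * Complex.exp (-(2 * (z : ℂ) ^ 3 / 3)) * deriv ψ0 (z ^ 2) := by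
  set s : ℝ := Real.sqrt z with hs
  have hzne : z ≠ 0 := hz.ne'
  have hsne : s ≠ 0 := Real.sqrt_ne_zero'.mpr hz
  -- derivative of the sqrt factor
  have h1 : HasDerivAt (fun t : ℝ => ((Real.sqrt t : ℝ) : ℂ)) ((1 / (2 * s) : ℝ) : ℂ) z :=
    (Real.hasDerivAt_sqrt hzne).ofReal_comp
  -- derivative of the exponential factor
  have hin : HasDerivAt (fun t : ℝ => -(2 * (t : ℂ) ^ 3 / 3)) (-(2 * (z : ℂ) ^ 2)) z := by
    have hc : HasDerivAt (fun w : ℂ => -(2 * w ^ 3 / 3)) (-(2 * (z : ℂ) ^ 2)) ((z : ℝ) : ℂ) := by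
      have := (((hasDerivAt_pow 3 ((z : ℝ) : ℂ)).const_mul (2 : ℂ)).div_const 3).neg
      refine HasDerivAt.congr_deriv (f := fun w : ℂ => -(2 * w ^ 3 / 3)) this ?_
      push_cast
      ring
    exact hc.comp_ofReal
  have h2 : HasDerivAt (fun t : ℝ => Complex.exp (-(2 * (t : ℂ) ^ 3 / 3)))
      (Complex.exp (-(2 * (z : ℂ) ^ 3 / 3)) * (-(2 * (z : ℂ) ^ 2))) z := hin.cexp
  -- derivative of ψ0 (z²)
  have hsq : HasDerivAt (fun t : ℝ => t ^ 2) (2 * z) z := by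
    simpa using hasDerivAt_pow 2 z
  have h3 : HasDerivAt (fun t : ℝ => ψ0 (t ^ 2)) ((2 * z) • deriv ψ0 (z ^ 2)) z :=
    HasDerivAt.scomp z (hψ0 (z ^ 2)).hasDerivAt hsq
  have hF : HasDerivAt
      (fun t : ℝ => ((Real.sqrt t : ℝ) : ℂ) * Complex.exp (-(2 * (t : ℂ) ^ 3 / 3)) * ψ0 (t ^ 2))
      ((((1 / (2 * s) : ℝ) : ℂ) * Complex.exp (-(2 * (z : ℂ) ^ 3 / 3))
          + ((s : ℝ) : ℂ) * (Complex.exp (-(2 * (z : ℂ) ^ 3 / 3)) * (-(2 * (z : ℂ) ^ 2))))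
            * ψ0 (z ^ 2)
        + ((s : ℝ) : ℂ) * Complex.exp (-(2 * (z : ℂ) ^ 3 / 3))
            * ((2 * z) • deriv ψ0 (z ^ 2))) z := (h1.mul h2).mul h3
  have heq : h =ᶠ[nhds z] fun t : ℝ =>
      ((Real.sqrt t : ℝ) : ℂ) * Complex.exp (-(2 * (t : ℂ) ^ 3 / 3)) * ψ0 (t ^ 2) := by
    filter_upwards [Ioi_mem_nhds hz] with t ht using hh t ht
  have hderiv : deriv h z =
      (((1 / (2 * s) : ℝ) : ℂ) * Complex.exp (-(2 * (z : ℂ) ^ 3 / 3))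
          + ((s : ℝ) : ℂ) * (Complex.exp (-(2 * (z : ℂ) ^ 3 / 3)) * (-(2 * (z : ℂ) ^ 2))))
            * ψ0 (z ^ 2)
        + ((s : ℝ) : ℂ) * Complex.exp (-(2 * (z : ℂ) ^ 3 / 3))
            * ((2 * z) • deriv ψ0 (z ^ 2)) := by
    rw [heq.deriv_eq]
    exact hF.deriv
  rw [hderiv, hh z hz]
  have hz2 : (z : ℂ) = ((s : ℝ) : ℂ) ^ 2 := by
    norm_cast
    rw [hs, Real.sq_sqrt hz.le]
  have hsne' : ((s : ℝ) : ℂ) ≠ 0 := by exact_mod_cast hsne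
  set E : ℂ := Complex.exp (-(2 * (z : ℂ) ^ 3 / 3)) with hE
  set P : ℂ := ψ0 (z ^ 2) with hP
  set P' : ℂ := deriv ψ0 (z ^ 2) with hP'
  simp only [Complex.real_smul]
  push_cast
  rw [hz2]
  field_simp [hsne']
  ring

/-- Let `ψ` be an Airy-type function (`ψ'' = x·ψ`) and set
`φ(z) = z^{1/2}·exp(−2z³/3)·ψ(z²)` for `z > 0`. For the Kac–Schwarz operator
`A = (1/(2z))·d/dz − 1/(4z²) + z` of the `(2,1)` model one has `A²φ = z²·φ` on `(0,∞)`,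
exhibiting the companion matrix `[[0,1],[z²,0]]`. -/
theorem kac_schwarz_airy_companion
    (ψ : ℝ → ℂ) (hψ : Differentiable ℝ ψ) (hψ' : Differentiable ℝ (deriv ψ))
    (hAiry : ∀ x : ℝ, deriv (deriv ψ) x = (x : ℂ) * ψ x)
    (φ : ℝ → ℂ)
    (hφ : ∀ z : ℝ, 0 < z →
      φ z = (Real.sqrt z : ℂ) * Complex.exp (-(2 * (z : ℂ) ^ 3 / 3)) * ψ (z ^ 2))
    (A : (ℝ → ℂ) → ℝ → ℂ)
    (hA : ∀ f : ℝ → ℂ, ∀ z : ℝ,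
      A f z = (1 / (2 * (z : ℂ))) * deriv f z - (1 / (4 * (z : ℂ) ^ 2)) * f z + (z : ℂ) * f z) :
    ∀ z : ℝ, 0 < z → A (A φ) z = (z : ℂ) ^ 2 * φ z := by
  intro z hz
  have step1 : ∀ w : ℝ, 0 < w →
      A φ w = (Real.sqrt w : ℂ) * Complex.exp (-(2 * (w : ℂ) ^ 3 / 3)) * deriv ψ (w ^ 2) := by
    intro w hw
    rw [hA]
    exact kac_schwarz_step ψ hψ φ hφ w hw
  rw [hA, kac_schwarz_step (deriv ψ) hψ' (A φ) step1 z hz, hAiry, hφ z hz]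
  push_cast
  ring
end
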